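/- Let d ≥ 1, F > 0, r > 0, ε > 0, t > 0, c ∈ ℝ^d, and A = [c−t, c+t]^d. Let η(u) = max(u,0), and for ξ > 0 define g_i(x_i) = η((x_i − c_i + t)/ξ + 1) − η((x_i − c_i + t)/ξ) − η((x_i − c_i − t)/ξ) + η((x_i − c_i − t)/ξ − 1) and g(x) = Π_{i=1}^d g_i(x_i). If 0 < ξ ≤ min{ε^r / (2^d (d+1) F^r t^{d−1}), t/2^d}, then every measurable f : ℝ^d → ℝ with |f(x)| ≤ F for all x satisfies ∫_{ℝ^d \ A} |f(x) g(x)|^r dx ≤ ε^r, i.e. ‖f g‖_{L^r(A^c)} ≤ ε. -/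

import Mathlib

open MeasureTheory
open scoped ENNReal

noncomputable section

abbrev Euc (d : ℕ) : Type := EuclideanSpace ℝ (Fin d)

/-- The ReLU function `η(u) = max(u, 0)`. -/
def relu (u : ℝ) : ℝ := max u 0

/-- The univariate trapezoidal cutoff
`g_i(x_i) = η((x_i−c_i+t)/ξ + 1) − η((x_i−c_i+t)/ξ) − η((x_i−c_i−t)/ξ) + η((x_i−c_i−t)/ξ − 1)`. -/
def cutoff1 (t ξ ci xi : ℝ) : ℝ :=
  relu ((xi - ci + t) / ξ + 1) - relu ((xi - ci + t) / ξ)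
    - relu ((xi - ci - t) / ξ) + relu ((xi - ci - t) / ξ - 1)

/-- The product cutoff `g(x) = Π_{i=1}^d g_i(x_i)`. -/
def cutoff {d : ℕ} (c : Euc d) (t ξ : ℝ) (x : Euc d) : ℝ := ∏ i, cutoff1 t ξ (c i) (x i)

/-- The axis-aligned cube `A = [c − t, c + t]^d`. -/
def cubeAt {d : ℕ} (c : Euc d) (t : ℝ) : Set (Euc d) := {x | ∀ i, |x i - c i| ≤ t}

/-! ### Auxiliary lemmas -/

lemma relu_succ_sub (u : ℝ) : relu (u+1) - relu u = min (max (u+1) 0) 1 := by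
  unfold relu
  rcases le_total (u+1) 0 with h|h
  · rw [max_eq_right h, max_eq_right (by linarith : u ≤ 0), min_eq_left (by linarith)]
    ring
  · rcases le_total u 0 with h'|h'
    · rw [max_eq_left h, max_eq_right h', min_eq_left (by linarith)]
      ring
    · rw [max_eq_left h, max_eq_left h', min_eq_right (by linarith)]
      ring

lemma clamp_of_one_le {v : ℝ} (h : 1 ≤ v) : min (max v 0) 1 = 1 :=
  min_eq_right (le_trans h (le_max_left _ _))

lemma clamp_of_le_zero {v : ℝ} (h : v ≤ 0) : min (max v 0) 1 = 0 := by
  rw [max_eq_right h]; exact min_eq_left zero_le_one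

lemma cutoff1_eq (t ξ ci xi : ℝ) :
    cutoff1 t ξ ci xi
      = min (max ((xi-ci+t)/ξ + 1) 0) 1 - min (max ((xi-ci-t)/ξ) 0) 1 := by
  unfold cutoff1
  have h1 := relu_succ_sub ((xi-ci+t)/ξ)
  have h2 := relu_succ_sub ((xi-ci-t)/ξ - 1)
  have hb : (xi-ci-t)/ξ - 1 + 1 = (xi-ci-t)/ξ := by ring
  rw [hb] at h2
  linarith

lemma cutoff1_nonneg {t ξ : ℝ} (ht : 0 < t) (hξ : 0 < ξ) (ci xi : ℝ) :
    0 ≤ cutoff1 t ξ ci xi := by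
  rw [cutoff1_eq, sub_nonneg]
  have hle : (xi-ci-t)/ξ ≤ (xi-ci+t)/ξ + 1 := by
    have h0 : (xi-ci+t)/ξ - (xi-ci-t)/ξ = 2*t/ξ := by ring
    have h1 : (0:ℝ) ≤ 2*t/ξ := by positivity
    linarith
  exact min_le_min (max_le_max hle le_rfl) le_rfl

lemma cutoff1_le_one {t ξ : ℝ} (ci xi : ℝ) : cutoff1 t ξ ci xi ≤ 1 := by
  rw [cutoff1_eq]
  have h1 : min (max ((xi-ci+t)/ξ + 1) 0) 1 ≤ 1 := min_le_right _ _
  have h2 : (0:ℝ) ≤ min (max ((xi-ci-t)/ξ) 0) 1 :=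
    le_min (le_max_right _ _) zero_le_one
  linarith

lemma cutoff1_eq_zero {t ξ ci xi : ℝ} (ht : 0 < t) (hξ : 0 < ξ)
    (h : t + ξ ≤ |xi - ci|) : cutoff1 t ξ ci xi = 0 := by
  rw [cutoff1_eq]
  rcases le_abs.mp h with h'|h'
  · -- xi - ci ≥ t + ξ
    have hB : (1:ℝ) ≤ (xi-ci-t)/ξ := by
      rw [le_div_iff₀ hξ]; linarith
    have hA : (1:ℝ) ≤ (xi-ci+t)/ξ + 1 := by
      have : (0:ℝ) ≤ (xi-ci+t)/ξ := div_nonneg (by linarith) hξ.le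
      linarith
    rw [clamp_of_one_le hA, clamp_of_one_le hB, sub_self]
  · -- xi - ci ≤ -(t+ξ)
    have hA : (xi-ci+t)/ξ + 1 ≤ 0 := by
      have : (xi-ci+t)/ξ ≤ -1 := by
        rw [div_le_iff₀ hξ]; linarith
      linarith
    have hB : (xi-ci-t)/ξ ≤ 0 := div_nonpos_of_nonpos_of_nonneg (by linarith) hξ.le
    rw [clamp_of_le_zero hA, clamp_of_le_zero hB, sub_self]

lemma two_mul_add_one_le (d : ℕ) (h : 3 ≤ d) : 2*d+1 ≤ 2^d := by
  induction d with
  | zero => omega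
  | succ n ih =>
    rcases Nat.lt_or_ge n 3 with h'|h'
    · interval_cases n <;> simp_all
    · have h1 := ih h'
      have h2 : 2 ≤ 2^n := by
        calc 2 = 2^1 := rfl
        _ ≤ 2^n := Nat.pow_le_pow_right (by norm_num) (by omega)
      have h3 : 2^(n+1) = 2^n + 2^n := by ring
      omega

lemma nat_sq_le (d : ℕ) : d*d ≤ 2^d + 1 := by
  induction d with
  | zero => simp
  | succ n ih =>
    rcases Nat.lt_or_ge n 3 with h|h
    · interval_cases n <;> norm_num
    · have h1 := two_mul_add_one_le n h
      have h2 : (n+1)*(n+1) = n*n + (2*n+1) := by ring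
      have h3 : 2^(n+1) = 2^n + 2^n := by ring
      omega

lemma pow_sub_pow_le' {a b : ℝ} (hb : 0 ≤ b) (hab : b ≤ a) (n : ℕ) :
    a^n - b^n ≤ n * (a - b) * a^(n-1) := by
  induction n with
  | zero => simp
  | succ n ih =>
    have ha : 0 ≤ a := hb.trans hab
    have h2 : a*(a^n - b^n) ≤ a * (n*(a-b)*a^(n-1)) := mul_le_mul_of_nonneg_left ih ha
    have h3 : a * ((n:ℝ)*(a-b)*a^(n-1)) = n*(a-b)*a^n := by
      rcases Nat.eq_zero_or_pos n with h|h
      · simp [h]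
      · have he : a * a^(n-1) = a^n := by
          rw [← pow_succ']; congr 1; omega
        calc a * ((n:ℝ)*(a-b)*a^(n-1)) = (n:ℝ)*(a-b)*(a*a^(n-1)) := by ring
        _ = n*(a-b)*a^n := by rw [he]
    have h4 : (a-b)*b^n ≤ (a-b)*a^n :=
      mul_le_mul_of_nonneg_left (pow_le_pow_left₀ hb hab n) (by linarith)
    have h5 : ((n+1 : ℕ):ℝ) * (a-b) * a^((n+1)-1) = n*(a-b)*a^n + (a-b)*a^n := by
      have hh : (n+1)-1 = n := rfl
      rw [hh]; push_cast; ring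
    have h6 : a^(n+1) - b^(n+1) = a*(a^n - b^n) + (a-b)*b^n := by ring
    rw [h5, h6]
    linarith [h2, h3.le, h3.ge]

lemma key_ineq (d : ℕ) (hd : 1 ≤ d) : (d:ℝ) * (1 + 1/2^d)^(d-1) ≤ d + 1 := by
  set x : ℝ := 1/2^d with hxdef
  have h2d : (0:ℝ) < 2^d := by positivity
  have h2d2 : (2:ℝ) ≤ 2^d := by
    calc (2:ℝ) = 2^1 := by norm_num
    _ ≤ 2^d := by exact pow_le_pow_right₀ (by norm_num) hd
  have hx0 : 0 < x := by positivity
  have hx1 : x ≤ 1/2 := by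
    rw [hxdef]
    rw [div_le_div_iff₀ h2d (by norm_num)]
    linarith
  set n : ℕ := d - 1 with hndef
  have hn : (n:ℝ) = (d:ℝ) - 1 := by
    rw [hndef]; push_cast [Nat.cast_sub hd]; ring
  have hd2 : ((d:ℝ)*(d:ℝ) - 1) * x ≤ 1 := by
    have hcast : (d:ℝ)*d ≤ 2^d + 1 := by exact_mod_cast nat_sq_le d
    rw [hxdef, mul_one_div, div_le_one h2d]
    linarith
  have hdlt : (d:ℝ) < 2^d := by exact_mod_cast Nat.lt_two_pow_self
  have hnx : (n:ℝ)*x < 1 := by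
    rw [hn, hxdef, mul_one_div, div_lt_one h2d]
    linarith
  have hb : 1 - (n:ℝ)*x ≤ (1-x)^n := by
    have := one_add_mul_le_pow (show (-2:ℝ) ≤ -x by linarith) n
    calc 1 - (n:ℝ)*x = 1 + (n:ℝ)*(-x) := by ring
    _ ≤ (1 + -x)^n := this
    _ = (1-x)^n := by rw [show (1:ℝ) + -x = 1 - x from by ring]
  have hprod : (1+x)^n*(1-x)^n ≤ 1 := by
    rw [← mul_pow]
    apply pow_le_one₀ (by nlinarith) (by nlinarith)
  have hPpos : (0:ℝ) ≤ (1+x)^n := by positivity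
  have h1 : (1+x)^n * (1 - (n:ℝ)*x) ≤ 1 :=
    le_trans (mul_le_mul_of_nonneg_left hb hPpos) hprod
  have hd0 : (0:ℝ) ≤ d := Nat.cast_nonneg d
  have h4 : (d:ℝ) * (1+x)^n * (1-(n:ℝ)*x) ≤ (d:ℝ) := by nlinarith
  have h5 : (d:ℝ) ≤ ((d:ℝ)+1)*(1-(n:ℝ)*x) := by rw [hn]; nlinarith
  exact le_of_mul_le_mul_right (h4.trans h5) (by linarith)

lemma final_real (d : ℕ) (hd : 1 ≤ d) (F r ε t ξ : ℝ) (hF : 0 < F) (hr : 0 < r)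
    (ht : 0 < t) (hξ0 : 0 < ξ)
    (hξ1 : ξ * (2^d * ((d:ℝ)+1) * F^r * t^(d-1)) ≤ ε^r) (hξ2 : ξ ≤ t/2^d) :
    F^r * ((2*(t+ξ))^d - (2*t)^d) ≤ ε^r := by
  have hFr : 0 < F^r := Real.rpow_pos_of_pos hF r
  have h2d : (0:ℝ) < 2^d := by positivity
  have hV := pow_sub_pow_le' (show (0:ℝ) ≤ 2*t by linarith)
    (show 2*t ≤ 2*(t+ξ) by linarith) d
  rw [show 2*(t+ξ) - 2*t = 2*ξ from by ring] at hV
  have hcoord : (2*(t+ξ))^(d-1) = 2^(d-1) * (t+ξ)^(d-1) := mul_pow 2 (t+ξ) (d-1)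
  have hle : (t+ξ)^(d-1) ≤ t^(d-1) * (1+1/2^d)^(d-1) := by
    rw [← mul_pow]
    apply pow_le_pow_left₀ (by linarith) ?_
    have h : t * (1+1/2^d) = t + t/2^d := by ring
    rw [h]
    have : ξ ≤ t/2^d := hξ2
    linarith
  have hkey := key_ineq d hd
  have h2pow : (2:ℝ) * 2^(d-1) = 2^d := by
    rw [← pow_succ']; congr 1; omega
  have hE : (0:ℝ) < 2^(d-1) := by positivity
  have hT : (0:ℝ) < t^(d-1) := by positivity
  calc F^r * ((2*(t+ξ))^d - (2*t)^d)
      ≤ F^r * ((d:ℝ) * (2*ξ) * (2^(d-1) * (t+ξ)^(d-1))) := by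
        rw [← hcoord]; exact mul_le_mul_of_nonneg_left hV hFr.le
    _ ≤ F^r * ((d:ℝ) * (2*ξ) * (2^(d-1) * (t^(d-1) * (1+1/2^d)^(d-1)))) := by
        gcongr
    _ = (ξ * (2*2^(d-1)) * t^(d-1) * F^r) * ((d:ℝ)*(1+1/2^d)^(d-1)) := by ring
    _ ≤ (ξ * (2*2^(d-1)) * t^(d-1) * F^r) * ((d:ℝ)+1) := by
        apply mul_le_mul_of_nonneg_left hkey
        positivity
    _ = ξ * (2^d * ((d:ℝ)+1) * F^r * t^(d-1)) := by rw [h2pow]; ring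
    _ ≤ ε^r := hξ1

lemma cubeAt_measurableSet {d : ℕ} (c : Euc d) (u : ℝ) : MeasurableSet (cubeAt c u) := by
  have h : cubeAt c u = ⋂ i, {x : Euc d | |x i - c i| ≤ u} := by
    ext x; simp [cubeAt, Set.mem_iInter]
  rw [h]
  refine MeasurableSet.iInter fun i => ?_
  have hm : Measurable fun x : Euc d => |x i - c i| := by
    apply Measurable.abs
    exact ((measurable_pi_apply i).comp (WithLp.measurable_ofLp 2 (Fin d → ℝ))).sub measurable_const
  exact measurableSet_le hm measurable_const

lemma cubeAt_volume {d : ℕ} (c : Euc d) {u : ℝ} (hu : 0 ≤ u) :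
    volume (cubeAt c u) = ENNReal.ofReal ((2*u)^d) := by
  have he : cubeAt c u
      = (MeasurableEquiv.toLp 2 (Fin d → ℝ)).symm ⁻¹'
        (Set.univ.pi fun i => Set.Icc (c i - u) (c i + u)) := by
    ext x
    simp only [cubeAt, Set.mem_setOf_eq, Set.mem_preimage, Set.mem_pi, Set.mem_univ,
      true_implies, Set.mem_Icc]
    refine forall_congr' fun i => ?_
    have hxi : (MeasurableEquiv.toLp 2 (Fin d → ℝ)).symm x i = x i := rfl
    rw [hxi, abs_le]
    constructor <;> intro h <;> constructor <;> linarith [h.1, h.2]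
  rw [he, (EuclideanSpace.volume_preserving_symm_measurableEquiv_toLp (Fin d)).measure_preimage
    ((MeasurableSet.univ_pi fun i => measurableSet_Icc).nullMeasurableSet)]
  rw [volume_pi_pi]
  have hfac : ∀ i : Fin d, volume (Set.Icc (c i - u) (c i + u)) = ENNReal.ofReal (2*u) := by
    intro i
    rw [Real.volume_Icc]
    congr 1
    ring
  rw [Finset.prod_congr rfl (fun i _ => hfac i), Finset.prod_const, Finset.card_univ,
    Fintype.card_fin, ← ENNReal.ofReal_pow (by linarith)]

/-- If `0 < ξ ≤ min { ε^r / (2^d (d+1) F^r t^{d−1}), t/2^d }` and `|f| ≤ F`,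
then `∫_{A^c} |f g|^r dx ≤ ε^r`, i.e. `‖f g‖_{L^r(A^c)} ≤ ε`. -/
theorem cutoff_tail_bound (d : ℕ) (hd : 1 ≤ d) (F r ε t : ℝ)
    (hF : 0 < F) (hr : 0 < r) (hε : 0 < ε) (ht : 0 < t) (c : Euc d) (ξ : ℝ) (hξ0 : 0 < ξ)
    (hξ : ξ ≤ min (ε ^ r / (2 ^ d * (d + 1) * F ^ r * t ^ (d - 1))) (t / 2 ^ d))
    (f : Euc d → ℝ) (hfm : Measurable f) (hfb : ∀ x, |f x| ≤ F) :
    ∫⁻ x in (cubeAt c t)ᶜ, ENNReal.ofReal (|f x * cutoff c t ξ x| ^ r) ≤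
      ENNReal.ofReal (ε ^ r) := by
  obtain ⟨hξ1, hξ2⟩ := le_min_iff.mp hξ
  have hFr : 0 < F^r := Real.rpow_pos_of_pos hF r
  have hD : (0:ℝ) < 2 ^ d * ((d:ℝ) + 1) * F ^ r * t ^ (d - 1) := by positivity
  have hξ1' : ξ * (2^d * ((d:ℝ)+1) * F^r * t^(d-1)) ≤ ε^r := by
    rw [← le_div_iff₀ hD]
    exact hξ1
  set s : ℝ := t + ξ with hs
  have hs0 : 0 < s := by positivity
  have hAB : cubeAt c t ⊆ cubeAt c s := fun x hx i => le_trans (hx i) (by simp [hs]; linarith)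
  have hmA := cubeAt_measurableSet c t
  have hmB := cubeAt_measurableSet c s
  have hvA : volume (cubeAt c t) = ENNReal.ofReal ((2*t)^d) := cubeAt_volume c ht.le
  have hvB : volume (cubeAt c s) = ENNReal.ofReal ((2*s)^d) := cubeAt_volume c hs0.le
  have hfin : volume (cubeAt c t) ≠ ⊤ := by rw [hvA]; exact ENNReal.ofReal_ne_top
  have hdiff : volume (cubeAt c s \ cubeAt c t) = ENNReal.ofReal ((2*s)^d - (2*t)^d) := by
    rw [measure_diff hAB hmA.nullMeasurableSet hfin, hvA, hvB,
      ← ENNReal.ofReal_sub _ (by positivity)]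
  have hpt : ∀ x ∈ (cubeAt c t)ᶜ,
      ENNReal.ofReal (|f x * cutoff c t ξ x| ^ r)
        ≤ (cubeAt c s \ cubeAt c t).indicator (fun _ => ENNReal.ofReal (F^r)) x := by
    intro x hx
    by_cases hxB : x ∈ cubeAt c s
    · rw [Set.indicator_of_mem ((Set.mem_diff x).mpr ⟨hxB, hx⟩)]
      apply ENNReal.ofReal_le_ofReal
      apply Real.rpow_le_rpow (abs_nonneg _) ?_ hr.le
      rw [abs_mul]
      have hg1 : |cutoff c t ξ x| ≤ 1 := by
        rw [cutoff, Finset.abs_prod]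
        apply Finset.prod_le_one (fun i _ => abs_nonneg _) (fun i _ => ?_)
        rw [abs_of_nonneg (cutoff1_nonneg ht hξ0 _ _)]
        exact cutoff1_le_one _ _
      calc |f x| * |cutoff c t ξ x| ≤ F * 1 :=
        mul_le_mul (hfb x) hg1 (abs_nonneg _) hF.le
      _ = F := mul_one F
    · rw [Set.indicator_of_notMem (fun hmem => hxB hmem.1)]
      have hi : ∃ i, s < |x i - c i| := by
        simpa [cubeAt, not_forall, not_le] using hxB
      obtain ⟨i, hi⟩ := hi
      have hz : cutoff c t ξ x = 0 :=
        Finset.prod_eq_zero (Finset.mem_univ i) (cutoff1_eq_zero ht hξ0 hi.le)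
      simp [hz, Real.zero_rpow hr.ne']
  calc ∫⁻ x in (cubeAt c t)ᶜ, ENNReal.ofReal (|f x * cutoff c t ξ x| ^ r)
      ≤ ∫⁻ x in (cubeAt c t)ᶜ,
          (cubeAt c s \ cubeAt c t).indicator (fun _ => ENNReal.ofReal (F^r)) x :=
        setLIntegral_mono (measurable_const.indicator (hmB.diff hmA)) hpt
    _ ≤ ∫⁻ x, (cubeAt c s \ cubeAt c t).indicator (fun _ => ENNReal.ofReal (F^r)) x :=
        setLIntegral_le_lintegral _ _
    _ = ENNReal.ofReal (F^r) * volume (cubeAt c s \ cubeAt c t) :=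
        lintegral_indicator_const (hmB.diff hmA) _
    _ = ENNReal.ofReal (F^r * ((2*s)^d - (2*t)^d)) := by
        rw [hdiff, ← ENNReal.ofReal_mul hFr.le]
    _ ≤ ENNReal.ofReal (ε ^ r) :=
        ENNReal.ofReal_le_ofReal
          (final_real d hd F r ε t ξ hF hr ht hξ0 hξ1' hξ2)
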